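/- Let m ≥ 1 and let T ∈ Λ²ℂ² ⊗ S^{m-1}ℂ² be represented by e_1∧e_2 ⊗ f for a homogeneous polynomial f(x,y) of degree m-1. Then the nonzero eigenvalues of T, i.e., the λ ≠ 0 for which there exists (x,y) ≠ (0,0) with y·f(x,y) = λx^m and -x·f(x,y) = λy^m, are exactly the numbers ω·f(1,ω) where ω ranges over the (m+1)-th roots of -1 (and f(1,ω) ≠ 0). -/

import Mathlib

open MvPolynomial in
lemma eval_smul_homog {n : ℕ} {f : MvPolynomial (Fin 2) ℂ} (hf : f.IsHomogeneous n)
    (c : ℂ) (v : Fin 2 → ℂ) :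
    MvPolynomial.eval (fun i => c * v i) f = c ^ n * MvPolynomial.eval v f := by
  rw [eval_eq', eval_eq', Finset.mul_sum]
  refine Finset.sum_congr rfl fun d hd => ?_
  have hw : d 0 + d 1 = n := by
    have := hf (mem_support_iff.mp hd)
    simp [Finsupp.weight_apply, Finsupp.sum_fintype, Fin.sum_univ_two] at this
    omega
  rw [Fin.prod_univ_two, Fin.prod_univ_two, mul_pow, mul_pow, ← hw, pow_add]
  ring


/-- For T = e₁∧e₂ ⊗ f ∈ Λ²ℂ² ⊗ S^{m-1}ℂ² with f homogeneous of degree m-1, the nonzero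
eigenvalues of T (λ ≠ 0 with a nonzero solution of y·f(x,y) = λxᵐ, -x·f(x,y) = λyᵐ)
are exactly the numbers ω·f(1,ω) for (m+1)-th roots ω of -1 with f(1,ω) ≠ 0. -/
theorem wedge_tensor_nonzero_eigenvalues (m : ℕ) (hm : 1 ≤ m)
    (f : MvPolynomial (Fin 2) ℂ) (hf : f.IsHomogeneous (m - 1))
    (lam : ℂ) (hlam : lam ≠ 0) :
    (∃ x y : ℂ, (x, y) ≠ (0, 0) ∧
        y * MvPolynomial.eval ![x, y] f = lam * x ^ m ∧
        -(x * MvPolynomial.eval ![x, y] f) = lam * y ^ m) ↔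
      ∃ ω : ℂ, ω ^ (m + 1) = -1 ∧ MvPolynomial.eval ![1, ω] f ≠ 0 ∧
        lam = ω * MvPolynomial.eval ![1, ω] f := by
  constructor
  · rintro ⟨x, y, hxy, e1, e2⟩
    have hx0 : x ≠ 0 := by
      rintro rfl
      have hy : y ≠ 0 := by rintro rfl; exact hxy rfl
      apply hlam
      have : lam * y ^ m = 0 := by simpa using e2.symm
      rcases mul_eq_zero.mp this with h | h
      · exact h
      · exact absurd h (pow_ne_zero m hy)
    set ω := y / x with hω
    have hyx : y = ω * x := by rw [hω, div_mul_cancel₀ _ hx0]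
    have hxm : x * x ^ (m - 1) = x ^ m := by
      rw [← pow_succ']; congr 1; omega
    set F := MvPolynomial.eval ![1, ω] f with hF
    have key : MvPolynomial.eval ![x, y] f = x ^ (m - 1) * F := by
      have hv : ![x, y] = fun i => x * ![1, ω] i := by
        funext i; fin_cases i <;> simp [hyx] <;> ring
      rw [hv, eval_smul_homog hf]
    have hxmne : x ^ m ≠ 0 := pow_ne_zero _ hx0
    have hlamF : lam = ω * F := by
      have : (ω * F) * x ^ m = lam * x ^ m := by
        rw [← e1, key, hyx, ← hxm]; ring
      exact (mul_right_cancel₀ hxmne this).symm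
    have hsum : x ^ (m + 1) + y ^ (m + 1) = 0 := by
      have h3 : lam * (x ^ (m + 1) + y ^ (m + 1)) = 0 := by
        linear_combination -x * e1 - y * e2
      exact (mul_eq_zero.mp h3).resolve_left hlam
    have hroot : ω ^ (m + 1) = -1 := by
      have hx1 : x ^ (m + 1) ≠ 0 := pow_ne_zero _ hx0
      rw [hω, div_pow, div_eq_iff hx1]
      linear_combination hsum
    refine ⟨ω, hroot, ?_, hlamF⟩
    intro hF0
    exact hlam (by rw [hlamF, hF, hF0, mul_zero])
  · rintro ⟨ω, hroot, hFne, hlamF⟩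
    refine ⟨1, ω, by simp, ?_, ?_⟩
    · simpa [hlamF] using mul_comm ω (MvPolynomial.eval ![1, ω] f)
    · rw [hlamF]
      have : ω * ω ^ m = -1 := by rw [← pow_succ']; exact hroot
      linear_combination -(MvPolynomial.eval ![1, ω] f) * this
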